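/- arXiv:1401.0500 — 3 statements merged into one kernel-verified Lean document; each statement's English description precedes it below -/
import Mathlib

section
/- Let M be a finite matroid that is representable over some field, and let X_1, X_2, X_3, X_4 be any subsets of the ground set E(M). Then M satisfies the Ingleton inequality: r(X_3) + r(X_4) + r(X_1∪X_2) + r(X_1∪X_3∪X_4) + r(X_2∪X_3∪X_4) ≤ r(X_1∪X_3) + r(X_1∪X_4) + r(X_2∪X_3) + r(X_2∪X_4) + r(X_3∪X_4). -/
open Finset

universe u v

namespace Matroid

variable {α : Type*}

/-- The rank of a set in a matroid: the cardinality of a largest independent subset. -/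
noncomputable def rnk (M : Matroid α) (X : Set α) : ℕ :=
  sSup {n : ℕ | ∃ I, M.Indep I ∧ I ⊆ X ∧ I.ncard = n}

/-- The `n`-th Kinser inequality for the family `X 1, …, X n`. -/
def KinserIneq (M : Matroid α) (n : ℕ) (X : ℕ → Set α) : Prop :=
  (∑ i ∈ Finset.Icc 3 n, M.rnk (X i)) + M.rnk (X 1 ∪ X 2) + M.rnk (X 1 ∪ X 3 ∪ X n)
      + ∑ i ∈ Finset.Icc 4 n, M.rnk (X 2 ∪ X (i - 1) ∪ X i)
    ≤ M.rnk (X 1 ∪ X 3) + M.rnk (X 1 ∪ X n)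
      + (∑ i ∈ Finset.Icc 3 n, M.rnk (X 2 ∪ X i))
      + ∑ i ∈ Finset.Icc 4 n, M.rnk (X (i - 1) ∪ X i)

/-- `M` lies in the Kinser class `K n`: the `n`-th Kinser inequality holds for every
family of `n` subsets of the ground set. -/
def MemKinserClass (M : Matroid α) (n : ℕ) : Prop :=
  ∀ X : ℕ → Set α, (∀ i ∈ Finset.Icc 1 n, X i ⊆ M.E) → M.KinserIneq n X

/-- `M` is (isomorphic to) the matroid of linear dependence of a family of vectors of a
vector space over `𝔽`. -/
def IsRepOver {α : Type u} (M : Matroid α) (𝔽 : Type v) [Field 𝔽] : Prop :=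
  ∃ (W : Type (max u v)) (_ : AddCommGroup W) (_ : Module 𝔽 W) (φ : α → W),
    ∀ I : Set α, M.Indep I ↔ I ⊆ M.E ∧ LinearIndependent 𝔽 (fun x : I => φ x.1)

/-- Deletion of a set of elements from a matroid. -/
def del (M : Matroid α) (D : Set α) : Matroid α := M ↾ (M.E \ D)

/-- Contraction of a set of elements in a matroid. -/
def con (M : Matroid α) (C : Set α) : Matroid α := (M✶ ↾ (M✶.E \ C))✶

/-- `N` is a minor of `M`: it is obtained from `M` by contractions and deletions. -/
def IsMinorOf (N M : Matroid α) : Prop :=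
  ∃ C D : Set α, C ⊆ M.E ∧ D ⊆ M.E ∧ Disjoint C D ∧ N = (M.con C).del D

/-- `N` is a proper minor of `M`: at least one element is deleted or contracted. -/
def IsProperMinorOf (N M : Matroid α) : Prop :=
  ∃ C D : Set α, C ⊆ M.E ∧ D ⊆ M.E ∧ Disjoint C D ∧ (C ∪ D).Nonempty ∧
    N = (M.con C).del D

/-- A matroid isomorphism: a bijection of ground sets preserving independence. -/
def IsIsoTo {β : Type*} (M : Matroid α) (N : Matroid β) : Prop :=
  ∃ f : α → β, Set.BijOn f M.E N.E ∧ ∀ I ⊆ M.E, (M.Indep I ↔ N.Indep (f '' I))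

/-- The Ingleton inequality (the 4th Kinser inequality) for four subsets. -/
def IngletonIneq (M : Matroid α) (X₁ X₂ X₃ X₄ : Set α) : Prop :=
  M.rnk X₃ + M.rnk X₄ + M.rnk (X₁ ∪ X₂) + M.rnk (X₁ ∪ X₃ ∪ X₄) + M.rnk (X₂ ∪ X₃ ∪ X₄)
    ≤ M.rnk (X₁ ∪ X₃) + M.rnk (X₁ ∪ X₄) + M.rnk (X₂ ∪ X₃) + M.rnk (X₂ ∪ X₄)
      + M.rnk (X₃ ∪ X₄)

end Matroid


open Submodule Module in
lemma ingleton_subspace' {K V : Type*} [Field K] [AddCommGroup V] [Module K V]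
    (A B C D : Submodule K V) [FiniteDimensional K A]
    [FiniteDimensional K B] [FiniteDimensional K C] [FiniteDimensional K D] :
    finrank K C + finrank K D + finrank K ↥(A ⊔ B) + finrank K ↥(A ⊔ C ⊔ D)
        + finrank K ↥(B ⊔ C ⊔ D)
      ≤ finrank K ↥(A ⊔ C) + finrank K ↥(A ⊔ D) + finrank K ↥(B ⊔ C) + finrank K ↥(B ⊔ D)
        + finrank K ↥(C ⊔ D) := by
  set P := (A ⊔ C) ⊓ (A ⊔ D) with hP
  set Q := (B ⊔ C) ⊓ (B ⊔ D) with hQ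
  have eA : (A ⊔ C) ⊔ (A ⊔ D) = A ⊔ C ⊔ D := by
    rw [sup_sup_sup_comm, sup_idem, ← sup_assoc]
  have eB : (B ⊔ C) ⊔ (B ⊔ D) = B ⊔ C ⊔ D := by
    rw [sup_sup_sup_comm, sup_idem, ← sup_assoc]
  have h1 := Submodule.finrank_sup_add_finrank_inf_eq (A ⊔ C) (A ⊔ D)
  have h2 := Submodule.finrank_sup_add_finrank_inf_eq (B ⊔ C) (B ⊔ D)
  rw [eA, ← hP] at h1
  rw [eB, ← hQ] at h2
  have h3 := Submodule.finrank_sup_add_finrank_inf_eq P Q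
  have h6 := Submodule.finrank_sup_add_finrank_inf_eq C D
  have hAP : A ≤ P := le_inf le_sup_left le_sup_left
  have hBQ : B ≤ Q := le_inf le_sup_left le_sup_left
  have h4 : finrank K ↥(A ⊔ B) ≤ finrank K ↥(P ⊔ Q) :=
    Submodule.finrank_mono (sup_le_sup hAP hBQ)
  have hCDP : C ⊓ D ≤ P := le_inf (le_trans inf_le_left le_sup_right)
    (le_trans inf_le_right le_sup_right)
  have hCDQ : C ⊓ D ≤ Q := le_inf (le_trans inf_le_left le_sup_right)
    (le_trans inf_le_right le_sup_right)
  have h5 : finrank K ↥(C ⊓ D) ≤ finrank K ↥(P ⊓ Q) :=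
    Submodule.finrank_mono (le_inf hCDP hCDQ)
  omega

open Submodule Module in
lemma Matroid.rnk_eq_finrank_span {α : Type u} {𝔽 : Type*} [Field 𝔽] {W : Type*}
    [AddCommGroup W] [Module 𝔽 W] (M : Matroid α) [M.Finite] (φ : α → W)
    (hφ : ∀ I : Set α, M.Indep I ↔ I ⊆ M.E ∧ LinearIndependent 𝔽 (fun x : I => φ x.1))
    {X : Set α} (hX : X ⊆ M.E) :
    M.rnk X = finrank 𝔽 (span 𝔽 (φ '' X)) := by
  classical
  have hXfin : X.Finite := M.set_finite X hX
  haveI := FiniteDimensional.span_of_finite 𝔽 (hXfin.image φ)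
  have hub : ∀ n ∈ {n : ℕ | ∃ I, M.Indep I ∧ I ⊆ X ∧ I.ncard = n},
      n ≤ finrank 𝔽 (span 𝔽 (φ '' X)) := by
    rintro n ⟨I, hI, hIX, rfl⟩
    obtain ⟨-, hli⟩ := (hφ I).mp hI
    have hinj : Set.InjOn φ I := by
      intro x hx y hy hxy
      have := hli.injective (a₁ := ⟨x, hx⟩) (a₂ := ⟨y, hy⟩) hxy
      exact congrArg Subtype.val this
    have hIfin : I.Finite := hXfin.subset hIX
    have himg : LinearIndependent 𝔽 (fun x : (φ '' I) => (x : W)) := LinearIndepOn.id_image hli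
    haveI : Fintype (φ '' I) := (hIfin.image φ).fintype
    have hcard : finrank 𝔽 (span 𝔽 (φ '' I)) = (φ '' I).toFinset.card :=
      finrank_span_set_eq_card himg
    have hle : finrank 𝔽 (span 𝔽 (φ '' I)) ≤ finrank 𝔽 (span 𝔽 (φ '' X)) :=
      Submodule.finrank_mono (span_mono (Set.image_mono hIX))
    have hnc : I.ncard = (φ '' I).ncard := (Set.ncard_image_of_injOn hinj).symm
    rw [hnc, Set.ncard_eq_toFinset_card']
    omega
  apply le_antisymm
  · exact csSup_le ⟨0, ∅, M.empty_indep, Set.empty_subset X, Set.ncard_empty α⟩ hub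
  · obtain ⟨b, hbsub, hspan, hli⟩ := exists_linearIndependent 𝔽 (φ '' X)
    have hbfin : b.Finite := (hXfin.image φ).subset hbsub
    choose g hgX hgφ using fun y (hy : y ∈ b) => hbsub hy
    set I : Set α := Set.range (fun y : b => g y.1 y.2) with hI
    have hIX : I ⊆ X := by rintro x ⟨y, rfl⟩; exact hgX y.1 y.2
    have hmem : ∀ x ∈ I, φ x ∈ b := by rintro x ⟨y, rfl⟩; rw [hgφ y.1 y.2]; exact y.2
    have hinj : Set.InjOn φ I := by
      rintro x ⟨y, rfl⟩ x' ⟨y', rfl⟩ h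
      rw [hgφ y.1 y.2, hgφ y'.1 y'.2] at h
      have : y = y' := Subtype.ext h
      rw [this]
    have himgI : φ '' I = b := by
      apply Set.Subset.antisymm
      · rintro _ ⟨x, hx, rfl⟩; exact hmem x hx
      · rintro y hy; exact ⟨g y hy, ⟨⟨y, hy⟩, rfl⟩, hgφ y hy⟩
    have hIind : M.Indep I := by
      rw [hφ]
      refine ⟨hIX.trans hX, ?_⟩
      have : (fun x : I => φ x.1) = (fun y : b => (y : W)) ∘ (fun x : I => ⟨φ x.1, hmem x.1 x.2⟩) := rfl
      rw [this]
      exact hli.comp _ (fun x x' h => Subtype.ext (hinj x.2 x'.2 (congrArg Subtype.val h)))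
    haveI : Fintype b := hbfin.fintype
    have hcard : finrank 𝔽 (span 𝔽 (φ '' X)) = b.toFinset.card := by
      rw [← hspan]; exact finrank_span_set_eq_card hli
    have hnI : I.ncard = finrank 𝔽 (span 𝔽 (φ '' X)) := by
      rw [← Set.ncard_image_of_injOn hinj, himgI, hcard, Set.ncard_eq_toFinset_card']
    apply le_csSup
    · exact ⟨finrank 𝔽 (span 𝔽 (φ '' X)), hub⟩
    · exact ⟨I, hIind, hIX, hnI⟩

/-- A finite matroid representable over some field satisfies the Ingleton inequality. -/
theorem Matroid.isRepOver_ingletonIneq {α : Type u} (M : Matroid α) [M.Finite]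
    (hrep : ∃ (𝔽 : Type v) (_ : Field 𝔽), M.IsRepOver 𝔽)
    (X₁ X₂ X₃ X₄ : Set α) (h₁ : X₁ ⊆ M.E) (h₂ : X₂ ⊆ M.E) (h₃ : X₃ ⊆ M.E) (h₄ : X₄ ⊆ M.E) :
    M.IngletonIneq X₁ X₂ X₃ X₄ := by
  obtain ⟨𝔽, _, W, _, _, φ, hφ⟩ := hrep
  have r := fun {X : Set α} (hX : X ⊆ M.E) => M.rnk_eq_finrank_span φ hφ hX
  have hu : ∀ Y Z : Set α, Submodule.span 𝔽 (φ '' (Y ∪ Z)) =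
      Submodule.span 𝔽 (φ '' Y) ⊔ Submodule.span 𝔽 (φ '' Z) := by
    intro Y Z; rw [Set.image_union, Submodule.span_union]
  haveI i1 := FiniteDimensional.span_of_finite 𝔽 ((M.set_finite X₁ h₁).image φ)
  haveI i2 := FiniteDimensional.span_of_finite 𝔽 ((M.set_finite X₂ h₂).image φ)
  haveI i3 := FiniteDimensional.span_of_finite 𝔽 ((M.set_finite X₃ h₃).image φ)
  haveI i4 := FiniteDimensional.span_of_finite 𝔽 ((M.set_finite X₄ h₄).image φ)
  have e3 := r h₃
  have e4 := r h₄
  have e12 : M.rnk (X₁ ∪ X₂) = Module.finrank 𝔽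
      ↥(Submodule.span 𝔽 (φ '' X₁) ⊔ Submodule.span 𝔽 (φ '' X₂)) := by
    rw [r (Set.union_subset h₁ h₂), hu]
  have e13 : M.rnk (X₁ ∪ X₃) = Module.finrank 𝔽
      ↥(Submodule.span 𝔽 (φ '' X₁) ⊔ Submodule.span 𝔽 (φ '' X₃)) := by
    rw [r (Set.union_subset h₁ h₃), hu]
  have e14 : M.rnk (X₁ ∪ X₄) = Module.finrank 𝔽
      ↥(Submodule.span 𝔽 (φ '' X₁) ⊔ Submodule.span 𝔽 (φ '' X₄)) := by
    rw [r (Set.union_subset h₁ h₄), hu]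
  have e23 : M.rnk (X₂ ∪ X₃) = Module.finrank 𝔽
      ↥(Submodule.span 𝔽 (φ '' X₂) ⊔ Submodule.span 𝔽 (φ '' X₃)) := by
    rw [r (Set.union_subset h₂ h₃), hu]
  have e24 : M.rnk (X₂ ∪ X₄) = Module.finrank 𝔽
      ↥(Submodule.span 𝔽 (φ '' X₂) ⊔ Submodule.span 𝔽 (φ '' X₄)) := by
    rw [r (Set.union_subset h₂ h₄), hu]
  have e34 : M.rnk (X₃ ∪ X₄) = Module.finrank 𝔽
      ↥(Submodule.span 𝔽 (φ '' X₃) ⊔ Submodule.span 𝔽 (φ '' X₄)) := by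
    rw [r (Set.union_subset h₃ h₄), hu]
  have e134 : M.rnk (X₁ ∪ X₃ ∪ X₄) = Module.finrank 𝔽
      ↥(Submodule.span 𝔽 (φ '' X₁) ⊔ Submodule.span 𝔽 (φ '' X₃) ⊔ Submodule.span 𝔽 (φ '' X₄)) := by
    rw [r (Set.union_subset (Set.union_subset h₁ h₃) h₄), hu, hu]
  have e234 : M.rnk (X₂ ∪ X₃ ∪ X₄) = Module.finrank 𝔽
      ↥(Submodule.span 𝔽 (φ '' X₂) ⊔ Submodule.span 𝔽 (φ '' X₃) ⊔ Submodule.span 𝔽 (φ '' X₄)) := by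
    rw [r (Set.union_subset (Set.union_subset h₂ h₃) h₄), hu, hu]
  unfold Matroid.IngletonIneq
  rw [e3, e4, e12, e13, e14, e23, e24, e34, e134, e234]
  exact ingleton_subspace' _ _ _ _
end

section
/- Let M be a finite matroid, n ≥ 4 an integer, and suppose X_1, …, X_n is a bad family for the n-th Kinser inequality in M, i.e. a family of subsets of E(M) violating the inequality. Then there exists a bad family I_1, …, I_n for the n-th Kinser inequality in M in which each set I_j is independent in M; indeed, one may take each I_j to be a maximal independent subset (basis) of X_j. -/
open Finset

universe u v

namespace Matroid

lemma rnk_eq_ncard_of_basis' {α : Type*} (M : Matroid α) [M.Finite] {J X : Set α}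
    (hJ : M.IsBasis' J X) : M.rnk X = J.ncard := by
  have hub : ∀ m ∈ {k : ℕ | ∃ I, M.Indep I ∧ I ⊆ X ∧ I.ncard = k}, m ≤ J.ncard := by
    rintro m ⟨I, hI, hIX, rfl⟩
    obtain ⟨J', hJ', hIJ'⟩ := hI.subset_isBasis'_of_subset hIX
    have hcard : J'.encard = J.encard := hJ'.encard_eq_encard hJ
    have hJ'fin : J'.Finite := M.set_finite J' hJ'.indep.subset_ground
    calc I.ncard ≤ J'.ncard := Set.ncard_le_ncard hIJ' hJ'fin
      _ = J.ncard := by rw [Set.ncard_def, hcard, ← Set.ncard_def]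
  have hmem : J.ncard ∈ {k : ℕ | ∃ I, M.Indep I ∧ I ⊆ X ∧ I.ncard = k} :=
    ⟨J, hJ.indep, hJ.subset, rfl⟩
  exact le_antisymm (csSup_le ⟨J.ncard, hmem⟩ hub) (le_csSup ⟨J.ncard, hub⟩ hmem)

lemma rnk_eq_of_closure_eq {α : Type*} (M : Matroid α) [M.Finite] {X Y : Set α}
    (h : M.closure X = M.closure Y) : M.rnk X = M.rnk Y := by
  obtain ⟨J, hJ⟩ := M.exists_isBasis' X
  obtain ⟨K, hK⟩ := M.exists_isBasis' Y
  rw [M.rnk_eq_ncard_of_basis' hJ, M.rnk_eq_ncard_of_basis' hK]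
  have hJc : M.IsBasis J (M.closure Y) := h ▸ hJ.isBasis_closure_right
  have hcard : J.encard = K.encard := hJc.encard_eq_encard hK.isBasis_closure_right
  rw [Set.ncard_def, hcard, ← Set.ncard_def]

lemma closure_union_congr {α : Type*} (M : Matroid α) {A A' B B' : Set α}
    (h1 : M.closure A = M.closure A') (h2 : M.closure B = M.closure B') :
    M.closure (A ∪ B) = M.closure (A' ∪ B') := by
  rw [← M.closure_union_closure_left_eq, ← M.closure_union_closure_right_eq, h1, h2,
    M.closure_union_closure_left_eq, M.closure_union_closure_right_eq]

end Matroid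

/-- A bad family for the `n`-th Kinser inequality can be replaced by a bad family of
independent sets; indeed one may take a basis of each set of the family. -/
theorem Matroid.exists_indep_bad_family {α : Type*} (M : Matroid α) [M.Finite] {n : ℕ}
    (hn : 4 ≤ n) (X : ℕ → Set α) (hX : ∀ i ∈ Finset.Icc 1 n, X i ⊆ M.E)
    (hbad : ¬ M.KinserIneq n X) :
    ∃ I : ℕ → Set α, (∀ i ∈ Finset.Icc 1 n, M.IsBasis (I i) (X i)) ∧
      (∀ i ∈ Finset.Icc 1 n, M.Indep (I i)) ∧ ¬ M.KinserIneq n I := by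
  classical
  have hBex : ∀ i ∈ Finset.Icc 1 n, ∃ J, M.IsBasis J (X i) :=
    fun i hi => M.exists_isBasis (X i) (hX i hi)
  choose! I hI using hBex
  refine ⟨I, hI, fun i hi => (hI i hi).indep, fun hIneq => hbad ?_⟩
  have hc : ∀ i ∈ Finset.Icc 1 n, M.closure (I i) = M.closure (X i) :=
    fun i hi => (hI i hi).closure_eq_closure
  have hmem : ∀ i, 1 ≤ i → i ≤ n → i ∈ Finset.Icc 1 n := by
    intro i h1 h2; simp [Finset.mem_Icc, h1, h2]
  have h1m := hmem 1 (by omega) (by omega)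
  have h2m := hmem 2 (by omega) (by omega)
  have h3m := hmem 3 (by omega) (by omega)
  have hnm := hmem n (by omega) (by omega)
  -- rnk equalities
  have r1 : ∀ a ∈ Finset.Icc 1 n, M.rnk (I a) = M.rnk (X a) :=
    fun a ha => Matroid.rnk_eq_of_closure_eq M (hc a ha)
  have r2 : ∀ a ∈ Finset.Icc 1 n, ∀ b ∈ Finset.Icc 1 n,
      M.rnk (I a ∪ I b) = M.rnk (X a ∪ X b) := fun a ha b hb =>
    Matroid.rnk_eq_of_closure_eq M (Matroid.closure_union_congr M (hc a ha) (hc b hb))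
  have r3 : ∀ a ∈ Finset.Icc 1 n, ∀ b ∈ Finset.Icc 1 n, ∀ c ∈ Finset.Icc 1 n,
      M.rnk (I a ∪ I b ∪ I c) = M.rnk (X a ∪ X b ∪ X c) := fun a ha b hb c hc' =>
    Matroid.rnk_eq_of_closure_eq M
      (Matroid.closure_union_congr M (Matroid.closure_union_congr M (hc a ha) (hc b hb))
        (hc c hc'))
  unfold Matroid.KinserIneq at hIneq ⊢
  have e1 : ∑ i ∈ Finset.Icc 3 n, M.rnk (I i) = ∑ i ∈ Finset.Icc 3 n, M.rnk (X i) := by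
    refine Finset.sum_congr rfl fun i hi => ?_
    rw [Finset.mem_Icc] at hi
    exact r1 i (hmem i (by omega) (by omega))
  have e2 : ∑ i ∈ Finset.Icc 4 n, M.rnk (I 2 ∪ I (i - 1) ∪ I i)
      = ∑ i ∈ Finset.Icc 4 n, M.rnk (X 2 ∪ X (i - 1) ∪ X i) := by
    refine Finset.sum_congr rfl fun i hi => ?_
    rw [Finset.mem_Icc] at hi
    exact r3 2 h2m (i - 1) (hmem _ (by omega) (by omega)) i (hmem i (by omega) (by omega))
  have e3 : ∑ i ∈ Finset.Icc 3 n, M.rnk (I 2 ∪ I i) = ∑ i ∈ Finset.Icc 3 n, M.rnk (X 2 ∪ X i) := by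
    refine Finset.sum_congr rfl fun i hi => ?_
    rw [Finset.mem_Icc] at hi
    exact r2 2 h2m i (hmem i (by omega) (by omega))
  have e4 : ∑ i ∈ Finset.Icc 4 n, M.rnk (I (i - 1) ∪ I i)
      = ∑ i ∈ Finset.Icc 4 n, M.rnk (X (i - 1) ∪ X i) := by
    refine Finset.sum_congr rfl fun i hi => ?_
    rw [Finset.mem_Icc] at hi
    exact r2 (i - 1) (hmem _ (by omega) (by omega)) i (hmem i (by omega) (by omega))
  rw [e1, e2, e3, e4, r2 1 h1m 2 h2m, r3 1 h1m 3 h3m n hnm, r2 1 h1m 3 h3m,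
    r2 1 h1m n hnm] at hIneq
  exact hIneq
end

section
/- Let M be a finite matroid that is an excluded minor for the Kinser class K_4, i.e. M violates the 4th Kinser (Ingleton) inequality for some family of four subsets, but every proper minor of M satisfies it for all families. Let X_1, X_2, X_3, X_4 be a bad family in M for the 4th Kinser inequality. Then X_1, X_2, X_3, X_4 is a partition of E(M): the sets are pairwise disjoint and their union is E(M). -/
open Finset

universe u v

namespace Matroid

section Aux

variable {α : Type*} {M : Matroid α} {I J K X Y C D S T : Set α} {e : α}

lemma Indep.finite' [M.Finite] (hI : M.Indep I) : I.Finite :=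
  M.ground_finite.subset hI.subset_ground

lemma rnk_bdd [M.Finite] : BddAbove {n : ℕ | ∃ I, M.Indep I ∧ I ⊆ X ∧ I.ncard = n} := by
  refine ⟨M.E.ncard, ?_⟩
  rintro n ⟨I, hI, -, rfl⟩
  exact Set.ncard_le_ncard hI.subset_ground M.ground_finite

lemma ncard_le_rnk [M.Finite] (hI : M.Indep I) (hIX : I ⊆ X) : I.ncard ≤ M.rnk X :=
  le_csSup rnk_bdd ⟨I, hI, hIX, rfl⟩

lemma IsBasis'.rnk_eq [M.Finite] (hI : M.IsBasis' I X) : M.rnk X = I.ncard := by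
  refine le_antisymm (csSup_le ⟨0, ∅, M.empty_indep, Set.empty_subset _, by simp⟩ ?_)
    (ncard_le_rnk hI.indep hI.subset)
  rintro n ⟨J, hJ, hJX, rfl⟩
  by_contra hlt
  push_neg at hlt
  have hcard : I.encard < J.encard := by
    rw [← hI.indep.finite'.cast_ncard_eq, ← hJ.finite'.cast_ncard_eq]
    exact_mod_cast hlt
  obtain ⟨x, hx, hxI⟩ := hI.indep.augment hJ hcard
  exact hI.insert_not_indep ⟨hJX hx.1, hx.2⟩ hxI

lemma rnk_mono [M.Finite] (hXY : X ⊆ Y) : M.rnk X ≤ M.rnk Y := by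
  obtain ⟨I, hI⟩ := M.exists_isBasis' X
  rw [hI.rnk_eq]
  exact ncard_le_rnk hI.indep (hI.subset.trans hXY)

lemma rnk_submod [M.Finite] (X Y : Set α) :
    M.rnk (X ∪ Y) + M.rnk (X ∩ Y) ≤ M.rnk X + M.rnk Y := by
  obtain ⟨I, hI⟩ := M.exists_isBasis' (X ∩ Y)
  obtain ⟨J, hJ, hIJ⟩ := hI.indep.subset_isBasis'_of_subset
    (hI.subset.trans (Set.inter_subset_left.trans Set.subset_union_left))
  rw [hI.rnk_eq, hJ.rnk_eq]
  have hJfin := hJ.indep.finite'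
  have hIeq : J ∩ (X ∩ Y) = I := by
    refine (hI.eq_of_subset_indep (hJ.indep.subset Set.inter_subset_left)
      (Set.subset_inter hIJ hI.subset) Set.inter_subset_right).symm
  have hkey : (J ∩ X).ncard + (J ∩ Y).ncard = J.ncard + I.ncard := by
    rw [← hIeq, Set.inter_inter_distrib_left]
    have := Set.ncard_union_add_ncard_inter (J ∩ X) (J ∩ Y)
      (hJfin.subset Set.inter_subset_left) (hJfin.subset Set.inter_subset_left)
    rw [← Set.inter_union_distrib_left] at this
    rw [← this, Set.inter_eq_self_of_subset_left hJ.subset]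
  have h1 : (J ∩ X).ncard ≤ M.rnk X :=
    ncard_le_rnk (hJ.indep.subset Set.inter_subset_left) Set.inter_subset_right
  have h2 : (J ∩ Y).ncard ≤ M.rnk Y :=
    ncard_le_rnk (hJ.indep.subset Set.inter_subset_left) Set.inter_subset_right
  omega

lemma rnk_submod_insert [M.Finite] (h : S ⊆ T) :
    M.rnk (T ∪ {e}) + M.rnk S ≤ M.rnk T + M.rnk (S ∪ {e}) := by
  have h1 := rnk_submod (M := M) T (S ∪ {e})
  rw [← Set.union_assoc, Set.union_eq_self_of_subset_right h] at h1
  have h2 : M.rnk S ≤ M.rnk (T ∩ (S ∪ {e})) :=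
    rnk_mono (Set.subset_inter h Set.subset_union_left)
  omega

@[simp] lemma con_ground (M : Matroid α) (C : Set α) : (M.con C).E = M.E \ C := rfl

@[simp] lemma del_ground (M : Matroid α) (D : Set α) : (M.del D).E = M.E \ D := rfl

lemma del_empty (M : Matroid α) : M.del ∅ = M := by
  simp [del]

lemma con_empty (M : Matroid α) : M.con ∅ = M := by
  rw [con, Set.diff_empty, restrict_ground_eq_self, dual_dual]

lemma rnk_del (hX : X ⊆ M.E \ D) : (M.del D).rnk X = M.rnk X := by
  unfold rnk
  congr 1
  ext n
  constructor
  · rintro ⟨I, hI, hIX, rfl⟩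
    exact ⟨I, (restrict_indep_iff.1 hI).1, hIX, rfl⟩
  · rintro ⟨I, hI, hIX, rfl⟩
    exact ⟨I, restrict_indep_iff.2 ⟨hI, hIX.trans hX⟩, hIX, rfl⟩

instance con_finite [M.Finite] : (M.con C).Finite :=
  ⟨by rw [con_ground]; exact M.ground_finite.diff⟩

lemma con_indep_iff (hC : C ⊆ M.E) :
    (M.con C).Indep I ↔ I ⊆ M.E \ C ∧ ∃ J, M.IsBasis J C ∧ M.Indep (I ∪ J) := by
  constructor
  · intro hI
    obtain ⟨hIE, B', hB', hdj⟩ := dual_indep_iff_exists'.1 hI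
    rw [restrict_ground_eq] at hIE
    rw [isBase_restrict_iff'] at hB'
    have hB'b : M✶.IsBasis B' (M✶.E \ C) := hB'.isBasis (Set.diff_subset)
    obtain ⟨B, hB, hBeq⟩ := hB'b.exists_isBase
    have hbas := hB.compl_inter_isBasis_of_inter_isBasis (X := M✶.E \ C) (by rwa [← hBeq])
    rw [dual_dual, dual_ground, Set.diff_diff_cancel_left hC] at hbas
    refine ⟨hIE, (M.E \ B) ∩ C, hbas, ?_⟩
    have hBase : M.IsBase (M.E \ B) := hB.compl_isBase_of_dual
    refine hBase.indep.subset (Set.union_subset ?_ Set.inter_subset_left)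
    intro x hx
    refine ⟨(hIE hx).1, fun hxB => ?_⟩
    exact hdj.ne_of_mem hx (hBeq ▸ ⟨hxB, hIE hx⟩) rfl
  · rintro ⟨hIE, J, hJ, hIJ⟩
    obtain ⟨B, hB, hssub⟩ := hIJ.exists_isBase_superset
    have hJB : J = B ∩ C :=
      hJ.eq_of_subset_indep (hB.indep.subset Set.inter_subset_left)
        (Set.subset_inter ((Set.subset_union_right).trans hssub) hJ.subset)
        Set.inter_subset_right
    have hbas := hB.compl_inter_isBasis_of_inter_isBasis (X := C) (by rwa [← hJB])
    show ((M✶ ↾ (M✶.E \ C))✶).Indep I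
    rw [dual_indep_iff_exists']
    refine ⟨hIE, (M.E \ B) ∩ (M.E \ C), ?_, ?_⟩
    · exact isBase_restrict_iff'.2 hbas.isBasis'
    · exact Set.disjoint_left.2 fun x hx hx2 =>
        hx2.1.2 (hssub (Set.subset_union_left hx))

lemma rnk_con [M.Finite] (hC : C ⊆ M.E) :
    (M.con C).rnk Y + M.rnk C = M.rnk (Y ∪ C) := by
  obtain ⟨I, hI⟩ := (M.con C).exists_isBasis' Y
  obtain ⟨hIE, J, hJ, hIJ⟩ := (con_indep_iff hC).1 hI.indep
  rw [hI.rnk_eq, hJ.isBasis'.rnk_eq]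
  have hdis : Disjoint I J := Set.disjoint_left.2 fun x hx hxJ => (hIE hx).2 (hJ.subset hxJ)
  refine le_antisymm ?_ ?_
  · rw [← Set.ncard_union_eq hdis (hIJ.subset Set.subset_union_left).finite'
      (hIJ.subset Set.subset_union_right).finite']
    exact ncard_le_rnk hIJ (Set.union_subset_union hI.subset hJ.subset)
  · obtain ⟨K, hK, hJK⟩ := hJ.indep.subset_isBasis'_of_subset
      (hJ.subset.trans Set.subset_union_right)
    rw [hK.rnk_eq]
    have hKC : K ∩ C = J :=
      (hJ.eq_of_subset_indep (hK.indep.subset Set.inter_subset_left)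
        (Set.subset_inter hJK hJ.subset) Set.inter_subset_right).symm
    have hKI : (M.con C).Indep (K \ C) := by
      rw [con_indep_iff hC]
      refine ⟨Set.diff_subset_diff_left hK.indep.subset_ground, J, hJ, ?_⟩
      rw [← hKC, Set.diff_union_inter]
      exact hK.indep
    have hKY : K \ C ⊆ Y := fun x hx => (hK.subset hx.1).elim id fun h => absurd h hx.2
    have h1 : (K \ C).ncard ≤ I.ncard := by
      rw [← hI.rnk_eq]; exact ncard_le_rnk hKI hKY
    have h2 : (K \ C).ncard + J.ncard = K.ncard := by
      rw [← hKC, ← Set.ncard_union_eq (Set.disjoint_left.2 fun x hx hx2 => hx.2 hx2.2)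
        (hK.indep.finite'.diff) (hK.indep.finite'.subset Set.inter_subset_left),
        Set.diff_union_inter]
    omega

lemma kinserIneq_four_iff (M : Matroid α) (X : ℕ → Set α) :
    M.KinserIneq 4 X ↔
      M.rnk (X 3) + M.rnk (X 4) + M.rnk (X 1 ∪ X 2) + M.rnk (X 1 ∪ X 3 ∪ X 4) +
        M.rnk (X 2 ∪ X 3 ∪ X 4)
      ≤ M.rnk (X 1 ∪ X 3) + M.rnk (X 1 ∪ X 4) + M.rnk (X 2 ∪ X 3) + M.rnk (X 2 ∪ X 4) +
        M.rnk (X 3 ∪ X 4) := by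
  unfold KinserIneq
  rw [show Finset.Icc 3 4 = {3, 4} by decide, show Finset.Icc 4 4 = {4} by decide,
    Finset.sum_pair (by norm_num), Finset.sum_singleton, Finset.sum_pair (by norm_num),
    Finset.sum_singleton]
  norm_num
  constructor <;> (intro h; linarith)

end Aux

end Matroid


/-- A bad family for the Ingleton (4th Kinser) inequality in an excluded minor for `K 4`
is a partition of the ground set. -/
theorem Matroid.bad_family_partition_of_excludedMinor {α : Type*} (M : Matroid α)
    [M.Finite] (hM : ¬ M.MemKinserClass 4)
    (hmin : ∀ N : Matroid α, N.IsProperMinorOf M → N.MemKinserClass 4)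
    (X : ℕ → Set α) (hX : ∀ i ∈ Finset.Icc 1 4, X i ⊆ M.E)
    (hbad : ¬ M.KinserIneq 4 X) :
    X 1 ∪ X 2 ∪ X 3 ∪ X 4 = M.E ∧
      ∀ i ∈ Finset.Icc 1 4, ∀ j ∈ Finset.Icc 1 4, i ≠ j → Disjoint (X i) (X j) := by
  classical
  have h1 : X 1 ⊆ M.E := hX 1 (by decide)
  have h2 : X 2 ⊆ M.E := hX 2 (by decide)
  have h3 : X 3 ⊆ M.E := hX 3 (by decide)
  have h4 : X 4 ⊆ M.E := hX 4 (by decide)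
  rw [kinserIneq_four_iff] at hbad
  have hbad2 := Nat.lt_of_not_le hbad
  constructor
  · refine subset_antisymm
      (Set.union_subset (Set.union_subset (Set.union_subset h1 h2) h3) h4) ?_
    intro e he
    by_contra heu
    simp only [Set.mem_union, not_or] at heu
    obtain ⟨⟨⟨he1, he2⟩, he3⟩, he4⟩ := heu
    have hD : ∀ T : Set α, T ⊆ M.E → e ∉ T → T ⊆ M.E \ {e} := by
      intro T hTE heT x hx
      exact ⟨hTE hx, fun h => heT (h ▸ hx)⟩
    have hminor : (M.del {e}).IsProperMinorOf M := by
      refine ⟨∅, {e}, Set.empty_subset _, Set.singleton_subset_iff.2 he, ?_, by simp, ?_⟩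
      · exact disjoint_bot_left
      · rw [con_empty]
    have hK := hmin _ hminor X (by
      intro i hi
      rw [del_ground]
      rw [Finset.mem_Icc] at hi
      obtain ⟨hi1, hi2⟩ := hi
      interval_cases i
      · exact hD _ h1 he1
      · exact hD _ h2 he2
      · exact hD _ h3 he3
      · exact hD _ h4 he4)
    rw [kinserIneq_four_iff] at hK
    have d3 := rnk_del (D := {e}) (hD _ h3 he3)
    have d4 := rnk_del (D := {e}) (hD _ h4 he4)
    have d12 := rnk_del (D := {e}) (hD _ (Set.union_subset h1 h2) (fun h => h.elim he1 he2))
    have d134 := rnk_del (D := {e}) (hD _ (Set.union_subset (Set.union_subset h1 h3) h4)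
      (fun h => h.elim (fun h' => h'.elim he1 he3) he4))
    have d234 := rnk_del (D := {e}) (hD _ (Set.union_subset (Set.union_subset h2 h3) h4)
      (fun h => h.elim (fun h' => h'.elim he2 he3) he4))
    have d13 := rnk_del (D := {e}) (hD _ (Set.union_subset h1 h3) (fun h => h.elim he1 he3))
    have d14 := rnk_del (D := {e}) (hD _ (Set.union_subset h1 h4) (fun h => h.elim he1 he4))
    have d23 := rnk_del (D := {e}) (hD _ (Set.union_subset h2 h3) (fun h => h.elim he2 he3))
    have d24 := rnk_del (D := {e}) (hD _ (Set.union_subset h2 h4) (fun h => h.elim he2 he4))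
    have d34 := rnk_del (D := {e}) (hD _ (Set.union_subset h3 h4) (fun h => h.elim he3 he4))
    rw [d3, d4, d12, d134, d234, d13, d14, d23, d24, d34] at hK
    exact absurd hK hbad
  · intro i hi j hj hij
    by_contra hdis
    obtain ⟨e, hei, hej⟩ := Set.not_disjoint_iff.1 hdis
    have heE : e ∈ M.E := hX i hi hei
    set N := M.con {e} with hN
    have hminor : N.IsProperMinorOf M := by
      refine ⟨{e}, ∅, Set.singleton_subset_iff.2 heE, Set.empty_subset _,
        disjoint_bot_right, by simp, ?_⟩
      rw [del_empty]
    have hK := hmin _ hminor (fun k => X k \ {e}) (by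
      intro k hk
      rw [con_ground]
      exact Set.diff_subset_diff_left (hX k hk))
    rw [kinserIneq_four_iff] at hK
    simp only [← Set.union_diff_distrib] at hK
    have R : ∀ T : Set α, N.rnk (T \ {e}) + M.rnk {e} = M.rnk (T ∪ {e}) := by
      intro T
      rw [← Set.diff_union_self]
      exact rnk_con (Set.singleton_subset_iff.2 heE)
    have hC : M.rnk (X 3 ∪ {e}) + M.rnk (X 4 ∪ {e}) + M.rnk ((X 1 ∪ X 2) ∪ {e}) +
        M.rnk ((X 1 ∪ X 3 ∪ X 4) ∪ {e}) + M.rnk ((X 2 ∪ X 3 ∪ X 4) ∪ {e}) ≤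
        M.rnk ((X 1 ∪ X 3) ∪ {e}) + M.rnk ((X 1 ∪ X 4) ∪ {e}) + M.rnk ((X 2 ∪ X 3) ∪ {e}) +
        M.rnk ((X 2 ∪ X 4) ∪ {e}) + M.rnk ((X 3 ∪ X 4) ∪ {e}) := by
      have r3 := R (X 3); have r4 := R (X 4); have r12 := R (X 1 ∪ X 2)
      have r134 := R (X 1 ∪ X 3 ∪ X 4); have r234 := R (X 2 ∪ X 3 ∪ X 4)
      have r13 := R (X 1 ∪ X 3); have r14 := R (X 1 ∪ X 4); have r23 := R (X 2 ∪ X 3)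
      have r24 := R (X 2 ∪ X 4); have r34 := R (X 3 ∪ X 4)
      omega
    clear hK R
    have hTe : ∀ T : Set α, e ∈ T → T ∪ {e} = T := by
      intro T h
      rw [Set.union_singleton, Set.insert_eq_of_mem h]
    have case12 : e ∈ X 1 → e ∈ X 2 → False := by
      intro m1 m2
      rw [hTe _ (Set.mem_union_left _ m1), hTe _ (Set.mem_union_left _ (Set.mem_union_left _ m1)),
        hTe _ (Set.mem_union_left _ (Set.mem_union_left _ m2)),
        hTe _ (Set.mem_union_left _ m1), hTe _ (Set.mem_union_left _ m1),
        hTe _ (Set.mem_union_left _ m2), hTe _ (Set.mem_union_left _ m2)] at hC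
      have s34 := rnk_submod_insert (M := M) (e := e) (S := X 3) (T := X 3 ∪ X 4)
        Set.subset_union_left
      have m4 : M.rnk (X 4) ≤ M.rnk (X 4 ∪ {e}) := rnk_mono Set.subset_union_left
      have m3 : M.rnk (X 3) ≤ M.rnk (X 3 ∪ {e}) := rnk_mono Set.subset_union_left
      omega
    have case13 : e ∈ X 1 → e ∈ X 3 → False := by
      intro m1 m3
      rw [hTe _ m3, hTe _ (Set.mem_union_left _ m1),
        hTe _ (Set.mem_union_left _ (Set.mem_union_left _ m1)),
        hTe _ (Set.mem_union_left _ (Set.mem_union_right _ m3)),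
        hTe _ (Set.mem_union_left _ m1), hTe _ (Set.mem_union_left _ m1),
        hTe _ (Set.mem_union_right _ m3), hTe _ (Set.mem_union_left _ m3)] at hC
      have s24 := rnk_submod_insert (M := M) (e := e) (S := X 4) (T := X 2 ∪ X 4)
        Set.subset_union_right
      omega
    have case14 : e ∈ X 1 → e ∈ X 4 → False := by
      intro m1 m4
      rw [hTe _ m4, hTe _ (Set.mem_union_left _ m1),
        hTe _ (Set.mem_union_left _ (Set.mem_union_left _ m1)),
        hTe _ (Set.mem_union_right _ m4),
        hTe _ (Set.mem_union_left _ m1), hTe _ (Set.mem_union_left _ m1),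
        hTe _ (Set.mem_union_right _ m4), hTe _ (Set.mem_union_right _ m4)] at hC
      have s23 := rnk_submod_insert (M := M) (e := e) (S := X 3) (T := X 2 ∪ X 3)
        Set.subset_union_right
      omega
    have case23 : e ∈ X 2 → e ∈ X 3 → False := by
      intro m2 m3
      rw [hTe _ m3, hTe _ (Set.mem_union_right _ m2),
        hTe _ (Set.mem_union_left _ (Set.mem_union_right _ m3)),
        hTe _ (Set.mem_union_left _ (Set.mem_union_left _ m2)),
        hTe _ (Set.mem_union_right _ m3),
        hTe _ (Set.mem_union_left _ m2), hTe _ (Set.mem_union_left _ m2),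
        hTe _ (Set.mem_union_left _ m3)] at hC
      have s14 := rnk_submod_insert (M := M) (e := e) (S := X 4) (T := X 1 ∪ X 4)
        Set.subset_union_right
      omega
    have case24 : e ∈ X 2 → e ∈ X 4 → False := by
      intro m2 m4
      rw [hTe _ m4, hTe _ (Set.mem_union_right _ m2),
        hTe _ (Set.mem_union_right _ m4),
        hTe _ (Set.mem_union_left _ (Set.mem_union_left _ m2)),
        hTe _ (Set.mem_union_right _ m4),
        hTe _ (Set.mem_union_left _ m2), hTe _ (Set.mem_union_left _ m2),
        hTe _ (Set.mem_union_right _ m4)] at hC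
      have s13 := rnk_submod_insert (M := M) (e := e) (S := X 3) (T := X 1 ∪ X 3)
        Set.subset_union_right
      omega
    have case34 : e ∈ X 3 → e ∈ X 4 → False := by
      intro m3 m4
      rw [hTe _ m3, hTe _ m4,
        hTe _ (Set.mem_union_right _ m4), hTe _ (Set.mem_union_right _ m4),
        hTe _ (Set.mem_union_right _ m3), hTe _ (Set.mem_union_right _ m4),
        hTe _ (Set.mem_union_right _ m3), hTe _ (Set.mem_union_right _ m4),
        hTe _ (Set.mem_union_left _ m3)] at hC
      have m12 : M.rnk (X 1 ∪ X 2) ≤ M.rnk ((X 1 ∪ X 2) ∪ {e}) :=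
        rnk_mono Set.subset_union_left
      omega
    rw [Finset.mem_Icc] at hi hj
    obtain ⟨hi1, hi2⟩ := hi
    obtain ⟨hj1, hj2⟩ := hj
    interval_cases i <;> interval_cases j <;>
      first
      | exact absurd rfl hij
      | exact case12 hei hej | exact case12 hej hei
      | exact case13 hei hej | exact case13 hej hei
      | exact case14 hei hej | exact case14 hej hei
      | exact case23 hei hej | exact case23 hej hei
      | exact case24 hei hej | exact case24 hej hei
      | exact case34 hei hej | exact case34 hej hei
end
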